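/- Let m_1, m_2 ≥ 1 and let g_{1j2l}, g_{2l1j} ∈ [0,1] satisfy ∑_{l=1}^{m_2} g_{1j2l} = 1 for each j and ∑_{j=1}^{m_1} g_{2l1j} = 1 for each l. Let α_{1j}, α_{2l} ≥ 0 with ∑_j α_{1j} + ∑_l α_{2l} = α, let n_{1j}, n_{2l} be positive integers, and let 0 ≤ |T_{1j}| ≤ n_{1j}, 0 ≤ |T_{2l}| ≤ n_{2l}. Define α*_{1j} = α_{1j} + ∑_{l=1}^{m_2} (1 − |T_{2l}|/n_{2l}) g_{2l1j} α_{2l} and α*_{2l} = α_{2l} + ∑_{j=1}^{m_1} (1 − |T_{1j}|/n_{1j}) g_{1j2l} α*_{1j}. Then ∑_{j=1}^{m_1} (|T_{1j}|/n_{1j}) α*_{1j} + ∑_{l=1}^{m_2} (|T_{2l}|/n_{2l}) α*_{2l} ≤ α. -/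

import Mathlib

/-- Key inequality of Theorem 2 (two-layer Bonferroni gatekeeping):
the true-null-weighted sum of worst-case local levels for the two layers
is bounded by the total level `α`. -/
theorem two_layer_gatekeeping_key_inequality
    (m1 m2 : ℕ) (hm1 : 1 ≤ m1) (hm2 : 1 ≤ m2) (α : ℝ)
    (g12 g21 : ℕ → ℕ → ℝ)
    (a1 a2 astar1 astar2 : ℕ → ℝ) (n1 n2 T1 T2 : ℕ → ℕ)
    (hg12 : ∀ j l, 0 ≤ g12 j l ∧ g12 j l ≤ 1)
    (hg21 : ∀ l j, 0 ≤ g21 l j ∧ g21 l j ≤ 1)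
    (hg12row : ∀ j ∈ Finset.Icc 1 m1, ∑ l ∈ Finset.Icc 1 m2, g12 j l = 1)
    (hg21row : ∀ l ∈ Finset.Icc 1 m2, ∑ j ∈ Finset.Icc 1 m1, g21 l j = 1)
    (ha1 : ∀ j, 0 ≤ a1 j) (ha2 : ∀ l, 0 ≤ a2 l)
    (hn1 : ∀ j, 0 < n1 j) (hn2 : ∀ l, 0 < n2 l)
    (hT1 : ∀ j, T1 j ≤ n1 j) (hT2 : ∀ l, T2 l ≤ n2 l)
    (hα : (∑ j ∈ Finset.Icc 1 m1, a1 j) + ∑ l ∈ Finset.Icc 1 m2, a2 l = α)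
    (hstar1 : ∀ j ∈ Finset.Icc 1 m1,
      astar1 j = a1 j
        + ∑ l ∈ Finset.Icc 1 m2, (1 - (T2 l : ℝ) / n2 l) * g21 l j * a2 l)
    (hstar2 : ∀ l ∈ Finset.Icc 1 m2,
      astar2 l = a2 l
        + ∑ j ∈ Finset.Icc 1 m1, (1 - (T1 j : ℝ) / n1 j) * g12 j l * astar1 j) :
    (∑ j ∈ Finset.Icc 1 m1, ((T1 j : ℝ) / n1 j) * astar1 j)
      + (∑ l ∈ Finset.Icc 1 m2, ((T2 l : ℝ) / n2 l) * astar2 l) ≤ α := by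
  set t1 : ℕ → ℝ := fun j => (T1 j : ℝ) / n1 j with ht1def
  set t2 : ℕ → ℝ := fun l => (T2 l : ℝ) / n2 l with ht2def
  have ht1b : ∀ j, 0 ≤ t1 j ∧ t1 j ≤ 1 := by
    intro j
    constructor
    · positivity
    · rw [ht1def]
      exact div_le_one_of_le₀ (by exact_mod_cast hT1 j) (by positivity)
  have ht2b : ∀ l, 0 ≤ t2 l ∧ t2 l ≤ 1 := by
    intro l
    constructor
    · positivity
    · rw [ht2def]
      exact div_le_one_of_le₀ (by exact_mod_cast hT2 l) (by positivity)
  have hstar1nn : ∀ j ∈ Finset.Icc 1 m1, 0 ≤ astar1 j := by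
    intro j hj
    rw [hstar1 j hj]
    have : 0 ≤ ∑ l ∈ Finset.Icc 1 m2, (1 - t2 l) * g21 l j * a2 l := by
      apply Finset.sum_nonneg
      intro l _
      have h1 := (ht2b l).2
      have h2 := (hg21 l j).1
      have h3 := ha2 l
      exact mul_nonneg (mul_nonneg (by linarith) h2) h3
    linarith [ha1 j]
  -- sum of astar1 over all j
  have hsum1 : ∑ j ∈ Finset.Icc 1 m1, astar1 j
      = (∑ j ∈ Finset.Icc 1 m1, a1 j) + ∑ l ∈ Finset.Icc 1 m2, (1 - t2 l) * a2 l := by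
    rw [Finset.sum_congr rfl hstar1, Finset.sum_add_distrib]
    congr 1
    rw [Finset.sum_comm]
    apply Finset.sum_congr rfl
    intro l hl
    have : ∑ j ∈ Finset.Icc 1 m1, (1 - t2 l) * g21 l j = (1 - t2 l) := by
      rw [← Finset.mul_sum, hg21row l hl, mul_one]
    calc ∑ j ∈ Finset.Icc 1 m1, (1 - t2 l) * g21 l j * a2 l
        = (∑ j ∈ Finset.Icc 1 m1, (1 - t2 l) * g21 l j) * a2 l := by
          rw [Finset.sum_mul]
      _ = (1 - t2 l) * a2 l := by rw [this]
  -- bound the second sum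
  have h2 : ∑ l ∈ Finset.Icc 1 m2, t2 l * astar2 l
      ≤ (∑ l ∈ Finset.Icc 1 m2, t2 l * a2 l)
        + ∑ j ∈ Finset.Icc 1 m1, (1 - t1 j) * astar1 j := by
    have step1 : ∑ l ∈ Finset.Icc 1 m2, t2 l * astar2 l
        = ∑ l ∈ Finset.Icc 1 m2, (t2 l * a2 l
          + t2 l * ∑ j ∈ Finset.Icc 1 m1, (1 - t1 j) * g12 j l * astar1 j) := by
      apply Finset.sum_congr rfl
      intro l hl
      rw [hstar2 l hl, mul_add]
    rw [step1, Finset.sum_add_distrib]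
    apply add_le_add_right
    have hSnn : ∀ l ∈ Finset.Icc 1 m2,
        0 ≤ ∑ j ∈ Finset.Icc 1 m1, (1 - t1 j) * g12 j l * astar1 j := by
      intro l _
      apply Finset.sum_nonneg
      intro j hj
      have h1 := (ht1b j).2
      have h2 := (hg12 j l).1
      have h3 := hstar1nn j hj
      have : 0 ≤ (1 - t1 j) := by linarith
      positivity
    calc ∑ l ∈ Finset.Icc 1 m2, t2 l * ∑ j ∈ Finset.Icc 1 m1, (1 - t1 j) * g12 j l * astar1 j
        ≤ ∑ l ∈ Finset.Icc 1 m2, ∑ j ∈ Finset.Icc 1 m1, (1 - t1 j) * g12 j l * astar1 j := by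
          apply Finset.sum_le_sum
          intro l hl
          nth_rewrite 2 [← one_mul (∑ j ∈ Finset.Icc 1 m1, (1 - t1 j) * g12 j l * astar1 j)]
          exact mul_le_mul_of_nonneg_right (ht2b l).2 (hSnn l hl)
      _ = ∑ j ∈ Finset.Icc 1 m1, (1 - t1 j) * astar1 j := by
          rw [Finset.sum_comm]
          apply Finset.sum_congr rfl
          intro j hj
          calc ∑ l ∈ Finset.Icc 1 m2, (1 - t1 j) * g12 j l * astar1 j
              = (1 - t1 j) * (∑ l ∈ Finset.Icc 1 m2, g12 j l) * astar1 j := by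
                rw [Finset.mul_sum, Finset.sum_mul]
            _ = (1 - t1 j) * astar1 j := by rw [hg12row j hj, mul_one]
  have key : (∑ j ∈ Finset.Icc 1 m1, t1 j * astar1 j)
      + ∑ l ∈ Finset.Icc 1 m2, t2 l * astar2 l ≤ α := by
    have : (∑ j ∈ Finset.Icc 1 m1, t1 j * astar1 j)
        + ((∑ l ∈ Finset.Icc 1 m2, t2 l * a2 l)
          + ∑ j ∈ Finset.Icc 1 m1, (1 - t1 j) * astar1 j) = α := by
      have hc : (∑ j ∈ Finset.Icc 1 m1, t1 j * astar1 j)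
          + ∑ j ∈ Finset.Icc 1 m1, (1 - t1 j) * astar1 j
          = ∑ j ∈ Finset.Icc 1 m1, astar1 j := by
        rw [← Finset.sum_add_distrib]
        apply Finset.sum_congr rfl
        intro j _
        ring
      have hd : (∑ l ∈ Finset.Icc 1 m2, t2 l * a2 l)
          + ∑ l ∈ Finset.Icc 1 m2, (1 - t2 l) * a2 l
          = ∑ l ∈ Finset.Icc 1 m2, a2 l := by
        rw [← Finset.sum_add_distrib]
        apply Finset.sum_congr rfl
        intro l _
        ring
      have := hsum1
      linarith [hα]
    linarith [h2]
  exact key
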